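/- Finite-time practical consensus for the hybrid system: for any ε ∈ (0,1), along any solution z(t,j) the function V(y) = ½‖y‖² of y(t,j) = (I − 𝟙𝟙ᵀ/N)x(t,j) satisfies V(y(t,j)) ≤ e^{−2ελ₂(Sym(L))·t}·V(y(0,0)) whenever ‖y(s,·)‖ > (1/(1−ε))·(‖L‖/λ₂(Sym(L)))·(Δ/2)·√N for all earlier times; consequently there exists T(ε) ≥ 0 such that ‖x(t,j) − (𝟙𝟙ᵀ/N)x(0,0)‖ ≤ (1/(1−ε))·(‖L‖/λ₂(Sym(L)))·(Δ/2)·√N for all (t,j) in the domain with t ≥ T(ε). -/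

import Mathlib

open Matrix

noncomputable def en {N : ℕ} (v : Fin N → ℝ) : ℝ := Real.sqrt (∑ i, v i ^ 2)

lemma en_nonneg {N : ℕ} (v : Fin N → ℝ) : 0 ≤ en v := Real.sqrt_nonneg _

lemma en_sq {N : ℕ} (v : Fin N → ℝ) : (en v) ^ 2 = ∑ i, v i ^ 2 :=
  Real.sq_sqrt (Finset.sum_nonneg fun i _ => sq_nonneg _)

lemma cs_sum {N : ℕ} (u v : Fin N → ℝ) : |∑ i, u i * v i| ≤ en u * en v := by
  have h := Finset.sum_mul_sq_le_sq_mul_sq Finset.univ u v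
  have h1 : |∑ i, u i * v i| = Real.sqrt ((∑ i, u i * v i) ^ 2) := (Real.sqrt_sq_eq_abs _).symm
  rw [h1, en, en, ← Real.sqrt_mul (Finset.sum_nonneg fun i _ => sq_nonneg _)]
  exact Real.sqrt_le_sqrt h

lemma quad_gronwall {N : ℕ} (u w : Fin N → ℝ) (a t c : ℝ) (hat : a ≤ t)
    (hD : ∀ s ∈ Set.Ioo a t, ∑ i, (u i + (s - a) * w i) * w i ≤
      -c * ((1/2) * ∑ i, (u i + (s - a) * w i) ^ 2)) :
    (1/2) * ∑ i, (u i + (t - a) * w i) ^ 2 ≤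
      Real.exp (-(c * (t - a))) * ((1/2) * ∑ i, u i ^ 2) := by
  set F : ℝ → ℝ := fun s => (1/2) * ∑ i, (u i + (s - a) * w i) ^ 2 with hF
  have hF' : ∀ s, HasDerivAt F (∑ i, (u i + (s - a) * w i) * w i) s := by
    intro s
    have hterm : ∀ i : Fin N, HasDerivAt (fun r => (u i + (r - a) * w i) ^ 2)
        (2 * (u i + (s - a) * w i) ^ 1 * w i) s := by
      intro i
      have h1 : HasDerivAt (fun r : ℝ => u i + (r - a) * w i) (w i) s := by
        simpa using (((hasDerivAt_id s).sub_const a).mul_const (w i)).const_add (u i)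
      simpa using h1.fun_pow 2
    have hsum := HasDerivAt.fun_sum (fun i (_ : i ∈ Finset.univ) => hterm i)
    have hmul := hsum.const_mul (1/2 : ℝ)
    refine hmul.congr_deriv ?_
    rw [Finset.mul_sum]
    exact Finset.sum_congr rfl fun i _ => by ring
  set G : ℝ → ℝ := fun s => Real.exp (c * s) * F s with hG
  have hG' : ∀ s, HasDerivAt G
      (Real.exp (c * s) * (c * F s + ∑ i, (u i + (s - a) * w i) * w i)) s := by
    intro s
    have he : HasDerivAt (fun r : ℝ => Real.exp (c * r)) (Real.exp (c * s) * c) s := by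
      simpa using ((hasDerivAt_id s).const_mul c).exp
    have := he.mul (hF' s)
    refine this.congr_deriv ?_
    ring
  have hanti : AntitoneOn G (Set.Icc a t) := by
    apply antitoneOn_of_deriv_nonpos (convex_Icc a t)
    · exact fun s _ => ((hG' s).differentiableAt).continuousAt.continuousWithinAt
    · exact fun s _ => ((hG' s).differentiableAt).differentiableWithinAt
    · intro s hs
      rw [interior_Icc] at hs
      rw [(hG' s).deriv]
      have hd := hD s hs
      have he := (Real.exp_pos (c * s)).le
      apply mul_nonpos_of_nonneg_of_nonpos he
      have hd' : ∑ i, (u i + (s - a) * w i) * w i ≤ -c * F s := hd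
      linarith
  have h2 : G t ≤ G a := hanti (Set.left_mem_Icc.mpr hat) (Set.right_mem_Icc.mpr hat) hat
  have hFa : F a = (1/2) * ∑ i, u i ^ 2 := by simp [hF]
  have hepos := Real.exp_pos (c * t)
  have h3 : Real.exp (c * t) * F t ≤ Real.exp (c * a) * F a := h2
  have h4 : Real.exp (-(c * (t - a))) * F a = (Real.exp (c * a) * F a) / Real.exp (c * t) := by
    rw [eq_div_iff (ne_of_gt hepos)]
    rw [mul_comm (Real.exp (-(c * (t - a)))) (F a), mul_assoc, ← Real.exp_add]
    have harg : -(c * (t - a)) + c * t = c * a := by ring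
    rw [harg]
    ring
  have final : F t ≤ Real.exp (-(c * (t - a))) * F a := by
    rw [h4, le_div_iff₀ hepos]
    nlinarith [h3]
  rw [← hFa]
  exact final

lemma quad_invariant {N : ℕ} (u w : Fin N → ℝ) (a b R : ℝ) (hab : a ≤ b)
    (hu : ∑ i, u i ^ 2 ≤ R)
    (hD : ∀ s ∈ Set.Ico a b, R < ∑ i, (u i + (s - a) * w i) ^ 2 →
      ∑ i, (u i + (s - a) * w i) * w i < 0) :
    ∀ t ∈ Set.Icc a b, ∑ i, (u i + (t - a) * w i) ^ 2 ≤ R := by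
  have expand : ∀ cst : ℝ, ∑ i, (u i + cst * w i) ^ 2 =
      (∑ i, u i ^ 2) + 2 * cst * (∑ i, u i * w i) + cst ^ 2 * (∑ i, w i ^ 2) := by
    intro cst
    rw [Finset.mul_sum, Finset.mul_sum, ← Finset.sum_add_distrib, ← Finset.sum_add_distrib]
    exact Finset.sum_congr rfl fun i _ => by ring
  have expandD : ∀ cst : ℝ, ∑ i, (u i + cst * w i) * w i =
      (∑ i, u i * w i) + cst * (∑ i, w i ^ 2) := by
    intro cst
    rw [Finset.mul_sum, ← Finset.sum_add_distrib]
    exact Finset.sum_congr rfl fun i _ => by ring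
  have hw2 : 0 ≤ ∑ i, w i ^ 2 := Finset.sum_nonneg fun i _ => sq_nonneg _
  have step1 : ∀ t ∈ Set.Ico a b, ∑ i, (u i + (t - a) * w i) ^ 2 ≤ R := by
    intro t ht
    by_contra hcon
    push_neg at hcon
    have hDt := hD t ht hcon
    have hta : 0 ≤ t - a := by linarith [ht.1]
    nlinarith [hcon, hDt, hu, hw2, expand (t - a), expandD (t - a), sq_nonneg (t - a)]
  intro t ht
  rcases eq_or_lt_of_le ht.2 with heq | hlt
  · rcases eq_or_lt_of_le hab with haeq | halt
    · have hta : t = a := le_antisymm (haeq ▸ ht.2) ht.1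
      rw [hta]
      simpa using hu
    · have hcont : Continuous (fun s : ℝ => ∑ i, (u i + (s - a) * w i) ^ 2) := by
        apply continuous_finset_sum
        intro i _
        fun_prop
      have htend : Filter.Tendsto (fun s => ∑ i, (u i + (s - a) * w i) ^ 2)
          (nhdsWithin b (Set.Iio b)) (nhds (∑ i, (u i + (b - a) * w i) ^ 2)) :=
        (hcont.tendsto b).mono_left nhdsWithin_le_nhds
      have hev : ∀ᶠ s in nhdsWithin b (Set.Iio b),
          (fun s => ∑ i, (u i + (s - a) * w i) ^ 2) s ≤ R := by
        filter_upwards [Ico_mem_nhdsLT halt] with s hs using step1 s hs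
      have hfin := le_of_tendsto htend hev
      rw [heq]
      exact hfin
  · exact step1 t ⟨ht.1, hlt⟩

lemma lap_mulVec {N : ℕ} (A L : Matrix (Fin N) (Fin N) ℝ)
    (hL : L = (Matrix.diagonal fun i => ∑ j, A i j) - A) (v : Fin N → ℝ) (i : Fin N) :
    L.mulVec v i = (∑ j, A i j) * v i - ∑ j, A i j * v j := by
  rw [hL, Matrix.sub_mulVec]
  simp only [Pi.sub_apply]
  congr 1
  simp [Matrix.mulVec, dotProduct, Matrix.diagonal_apply, ite_mul, zero_mul,
    Finset.sum_ite_eq]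

lemma lap_quadform {N : ℕ} (A L : Matrix (Fin N) (Fin N) ℝ)
    (hL : L = (Matrix.diagonal fun i => ∑ j, A i j) - A)
    (hbal : ∀ i, ∑ j, A i j = ∑ j, A j i) (v : Fin N → ℝ) :
    ∑ i, v i * L.mulVec v i = (1/2) * ∑ i, ∑ j, A i j * (v i - v j) ^ 2 := by
  have e1 : ∑ i, v i * L.mulVec v i =
      ∑ i, ∑ j, (A i j * v i ^ 2 - A i j * (v i * v j)) := by
    apply Finset.sum_congr rfl; intro i _
    rw [lap_mulVec A L hL v i, Finset.sum_sub_distrib, mul_sub]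
    congr 1
    · rw [Finset.sum_mul, Finset.mul_sum]
      exact Finset.sum_congr rfl fun j _ => by ring
    · rw [Finset.mul_sum]
      exact Finset.sum_congr rfl fun j _ => by ring
  have key : ∑ i, ∑ j, A i j * v j ^ 2 = ∑ i, ∑ j, A i j * v i ^ 2 := by
    rw [Finset.sum_comm]
    apply Finset.sum_congr rfl; intro j _
    rw [← Finset.sum_mul, ← hbal j, Finset.sum_mul]
  have e3 : ∑ i, ∑ j, A i j * (v i - v j) ^ 2 =
      (∑ i, ∑ j, A i j * v i ^ 2) + (∑ i, ∑ j, A i j * v j ^ 2)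
        - 2 * (∑ i, ∑ j, A i j * (v i * v j)) := by
    rw [Finset.mul_sum, ← Finset.sum_add_distrib, ← Finset.sum_sub_distrib]
    apply Finset.sum_congr rfl; intro i _
    rw [Finset.mul_sum, ← Finset.sum_add_distrib, ← Finset.sum_sub_distrib]
    exact Finset.sum_congr rfl fun j _ => by ring
  have e4 : ∑ i, ∑ j, (A i j * v i ^ 2 - A i j * (v i * v j)) =
      (∑ i, ∑ j, A i j * v i ^ 2) - (∑ i, ∑ j, A i j * (v i * v j)) := by
    rw [← Finset.sum_sub_distrib]
    exact Finset.sum_congr rfl fun i _ => by rw [Finset.sum_sub_distrib]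
  rw [e1, e4, e3, key]
  ring

lemma lap_kernel {N : ℕ} (A L : Matrix (Fin N) (Fin N) ℝ)
    (hA : ∀ i j, 0 ≤ A i j)
    (hL : L = (Matrix.diagonal fun i => ∑ j, A i j) - A)
    (hbal : ∀ i, ∑ j, A i j = ∑ j, A j i)
    (hconn : ∀ i j : Fin N,
      Relation.ReflTransGen (fun a b => A a b ≠ 0 ∨ A b a ≠ 0) i j)
    (v : Fin N → ℝ) (hv : ∑ i, v i * L.mulVec v i = 0) : ∀ i j, v i = v j := by
  have hq := lap_quadform A L hL hbal v
  rw [hv] at hq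
  have hnn : ∀ i ∈ Finset.univ, (0:ℝ) ≤ ∑ j, A i j * (v i - v j) ^ 2 :=
    fun i _ => Finset.sum_nonneg fun j _ => mul_nonneg (hA i j) (sq_nonneg _)
  have h0 : ∑ i, ∑ j, A i j * (v i - v j) ^ 2 = 0 := by linarith
  have hterm : ∀ i j, A i j * (v i - v j) ^ 2 = 0 := by
    intro i j
    have h1 := (Finset.sum_eq_zero_iff_of_nonneg hnn).mp h0 i (Finset.mem_univ i)
    exact (Finset.sum_eq_zero_iff_of_nonneg
      (fun j _ => mul_nonneg (hA i j) (sq_nonneg _))).mp h1 j (Finset.mem_univ j)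
  have hadj : ∀ i j, A i j ≠ 0 → v i = v j := by
    intro i j hne
    rcases mul_eq_zero.mp (hterm i j) with h | h
    · exact absurd h hne
    · have := sq_eq_zero_iff.mp h
      linarith [sub_eq_zero.mp this]
  intro i j
  induction hconn i j with
  | refl => rfl
  | tail _ hbc ih =>
    rcases hbc with h | h
    · exact ih.trans (hadj _ _ h)
    · exact ih.trans (hadj _ _ h).symm

set_option maxHeartbeats 1000000 in
lemma spectral_gap {N : ℕ} (S : Matrix (Fin N) (Fin N) ℝ)
    (hsym : Sᵀ = S)
    (hker : ∀ v : Fin N → ℝ, S.mulVec v = 0 → (∑ i, v i) = 0 → v = 0)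
    (hrow : ∀ v : Fin N → ℝ, (∑ i, S.mulVec v i) = 0)
    (lam2 : ℝ)
    (hlb : ∀ μ : ℝ, μ ≠ 0 → (∃ v : Fin N → ℝ, v ≠ 0 ∧ S.mulVec v = μ • v) → lam2 ≤ μ) :
    ∀ v : Fin N → ℝ, (∑ i, v i) = 0 → lam2 * (∑ i, v i ^ 2) ≤ ∑ i, v i * S.mulVec v i := by
  classical
  let f : EuclideanSpace ℝ (Fin N) →ₗ[ℝ] ℝ :=
    { toFun := fun v => ∑ i, v i
      map_add' := by intro a b; exact Finset.sum_add_distrib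
      map_smul' := by intro c a; simp [Finset.mul_sum] }
  let W : Submodule ℝ (EuclideanSpace ℝ (Fin N)) := LinearMap.ker f
  let T : EuclideanSpace ℝ (Fin N) →ₗ[ℝ] EuclideanSpace ℝ (Fin N) := Matrix.toEuclideanLin S
  have hTapp : ∀ v : EuclideanSpace ℝ (Fin N), T v = S.mulVec v := fun v => rfl
  have hWT : ∀ w ∈ W, T w ∈ W := by
    intro w hw
    show (∑ i, (T w) i) = 0
    rw [hTapp]
    exact hrow w
  let Tr : W →ₗ[ℝ] W := T.restrict hWT
  have hinner : ∀ u v : EuclideanSpace ℝ (Fin N), (inner ℝ u v : ℝ) = ∑ i, u i * v i := by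
    intro u v
    rw [PiLp.inner_apply]
    simp [RCLike.inner_apply, mul_comm]
  have hsyme : ∀ i j, S i j = S j i := by
    intro i j
    exact congrFun (congrFun hsym j) i
  have hdotsym : ∀ u v : Fin N → ℝ, (∑ i, S.mulVec u i * v i) = ∑ i, u i * S.mulVec v i := by
    intro u v
    simp only [Matrix.mulVec, dotProduct, Finset.sum_mul, Finset.mul_sum]
    rw [Finset.sum_comm]
    apply Finset.sum_congr rfl; intro i _
    apply Finset.sum_congr rfl; intro j _
    rw [hsyme j i]; ring
  have hTrSym : Tr.IsSymmetric := by
    intro u v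
    rw [Submodule.coe_inner, Submodule.coe_inner]
    rw [LinearMap.restrict_coe_apply, LinearMap.restrict_coe_apply]
    rw [hinner, hinner, hTapp, hTapp]
    exact hdotsym u v
  let n := Module.finrank ℝ W
  have hn : Module.finrank ℝ W = n := rfl
  let b := hTrSym.eigenvectorBasis hn
  let μ := hTrSym.eigenvalues hn
  have hmu : ∀ i, lam2 ≤ μ i := by
    intro i
    have happ := hTrSym.apply_eigenvectorBasis hn i
    have hb0 : (b i : W) ≠ 0 := b.toBasis.ne_zero i
    have hw0 : (((b i : W) : EuclideanSpace ℝ (Fin N)) : Fin N → ℝ) ≠ 0 := by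
      simpa using hb0
    have hSw : S.mulVec ((b i : W) : EuclideanSpace ℝ (Fin N)) =
        μ i • ((b i : W) : EuclideanSpace ℝ (Fin N)) := by
      have h2 := congrArg (Subtype.val) happ
      rw [LinearMap.restrict_coe_apply] at h2
      rw [← hTapp]
      exact congrArg WithLp.ofLp h2
    have hmune : μ i ≠ 0 := by
      intro h0
      apply hw0
      apply hker
      · rw [hSw, h0, zero_smul]
      · exact (b i : W).2
    exact hlb (μ i) hmune ⟨((b i : W) : EuclideanSpace ℝ (Fin N)), hw0, hSw⟩
  intro v hv
  have hvW : (WithLp.toLp 2 v : EuclideanSpace ℝ (Fin N)) ∈ W := hv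
  have key : ∀ vW : W, lam2 * (‖vW‖ ^ 2) ≤ (inner ℝ vW (Tr vW) : ℝ) := by
    intro vW
    have hrepr : ∀ i, b.repr (Tr vW) i = μ i * b.repr vW i :=
      fun i => hTrSym.eigenvectorBasis_apply_self_apply hn vW i
    have hinner2 : (inner ℝ vW (Tr vW) : ℝ) = ∑ i, b.repr vW i * b.repr (Tr vW) i := by
      rw [← b.repr.inner_map_map vW (Tr vW), PiLp.inner_apply]
      simp only [RCLike.inner_apply, starRingEnd_apply, star_trivial]
      exact Finset.sum_congr rfl fun i _ => mul_comm _ _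
    have hnorm2 : ‖vW‖ ^ 2 = ∑ i, (b.repr vW i) ^ 2 := by
      rw [← b.repr.norm_map vW, EuclideanSpace.norm_eq,
        Real.sq_sqrt (Finset.sum_nonneg fun i _ => sq_nonneg _)]
      simp [sq_abs]
    rw [hinner2, hnorm2, Finset.mul_sum]
    apply Finset.sum_le_sum
    intro i _
    rw [hrepr i]
    have := hmu i
    nlinarith [sq_nonneg (b.repr vW i)]
  set vE : EuclideanSpace ℝ (Fin N) := WithLp.toLp 2 v with hvE
  have h1 := key ⟨vE, hvW⟩
  have h2 : (‖(⟨vE, hvW⟩ : W)‖ : ℝ) ^ 2 = ∑ i, v i ^ 2 := by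
    have hc : ‖(⟨vE, hvW⟩ : W)‖ = ‖vE‖ := rfl
    rw [hc, EuclideanSpace.norm_eq, Real.sq_sqrt (Finset.sum_nonneg fun i _ => sq_nonneg _)]
    simp [sq_abs, hvE]
  have h3 : (inner ℝ (⟨vE, hvW⟩ : W) (Tr ⟨vE, hvW⟩) : ℝ) = ∑ i, v i * S.mulVec v i := by
    rw [Submodule.coe_inner, LinearMap.restrict_coe_apply, hinner, hTapp]
  rw [h2, h3] at h1
  exact h1

set_option maxHeartbeats 1600000 in
/-- finite-time practical consensus for the hybrid system with
hysteretic quantizers.  For any `ε ∈ (0,1)`: as long as the deviation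
`y = (I − 𝟙𝟙ᵀ/N)x` has stayed above the threshold
`B = (1/(1−ε))·(‖L‖/λ₂(Sym L))·(Δ/2)·√N`, the Lyapunov function `V = ½‖y‖²`
decays as `V(t) ≤ e^{−2ελ₂(Sym L)t}·V(0)`; consequently there is `T(ε) ≥ 0`
such that `‖x(t,j) − (𝟙𝟙ᵀ/N)x(0,0)‖ ≤ B` for all domain times `t ≥ T(ε)`. -/
theorem hybrid_practical_consensus (N : ℕ) (Δ : ℝ) (hΔ : 0 < Δ)
    (A : Matrix (Fin N) (Fin N) ℝ)
    (hA : ∀ i j, 0 ≤ A i j) (hdiag : ∀ i, A i i = 0)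
    (hbal : ∀ i, ∑ j, A i j = ∑ j, A j i)
    (hconn : ∀ i j : Fin N,
      Relation.ReflTransGen (fun a b => A a b ≠ 0 ∨ A b a ≠ 0) i j)
    (L : Matrix (Fin N) (Fin N) ℝ)
    (hL : L = (Matrix.diagonal fun i => ∑ j, A i j) - A)
    (S : Matrix (Fin N) (Fin N) ℝ) (hS : S = (1 / 2 : ℝ) • (L + Lᵀ))
    (lam2 : ℝ)
    (hlam : IsLeast {μ : ℝ | μ ≠ 0 ∧ ∃ v : Fin N → ℝ, v ≠ 0 ∧ S.mulVec v = μ • v} lam2)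
    (CL : ℝ)
    (hCL : IsLeast {c : ℝ | 0 ≤ c ∧ ∀ v : Fin N → ℝ, en (L.mulVec v) ≤ c * en v} CL)
    (τ : ℕ → ℝ) (hτ0 : τ 0 = 0) (hτ : Monotone τ)
    (x : ℕ → ℝ → Fin N → ℝ) (q : ℕ → Fin N → ℝ)
    (hlat : ∀ j i, ∃ m : ℤ, q j i = m * (Δ / 2))
    (hflow : ∀ j, ∀ s ∈ Set.Icc (τ j) (τ (j + 1)),
      x j s = x j (τ j) + (s - τ j) • (-(L.mulVec (q j))))
    (hC : ∀ j, ∀ s ∈ Set.Ico (τ j) (τ (j + 1)), ∀ i, |x j s i - q j i| < Δ / 2)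
    (hjumpx : ∀ j, x (j + 1) (τ (j + 1)) = x j (τ (j + 1)))
    (hjumpq : ∀ j i, q (j + 1) i =
      if q j i + Δ / 2 ≤ x j (τ (j + 1)) i then q j i + Δ / 2
      else if x j (τ (j + 1)) i ≤ q j i - Δ / 2 then q j i - Δ / 2
      else q j i)
    (hX0 : ∀ i, q 0 i - Δ / 2 ≤ x 0 0 i ∧ x 0 0 i < q 0 i + Δ / 2)
    (y : ℕ → ℝ → Fin N → ℝ)
    (hy : ∀ j s, y j s = fun i => x j s i - (∑ m, x j s m) / N) :
    ∀ ε : ℝ, 0 < ε → ε < 1 →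
      ((∀ j, ∀ t ∈ Set.Icc (τ j) (τ (j + 1)),
        (∀ j' s, s ∈ Set.Icc (τ j') (τ (j' + 1)) → s ≤ t →
          1 / (1 - ε) * (CL / lam2) * (Δ / 2) * Real.sqrt N < en (y j' s)) →
        (1 / 2) * ∑ i, (y j t i) ^ 2
          ≤ Real.exp (-(2 * ε * lam2 * t)) * ((1 / 2) * ∑ i, (y 0 0 i) ^ 2)) ∧
      (∃ T : ℝ, 0 ≤ T ∧ ∀ j, ∀ t ∈ Set.Icc (τ j) (τ (j + 1)), T ≤ t →
        en (fun i => x j t i - (∑ m, x 0 0 m) / N)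
          ≤ 1 / (1 - ε) * (CL / lam2) * (Δ / 2) * Real.sqrt N)) := by
  intro ε hε0 hε1
  have h1ε : 0 < 1 - ε := by linarith
  obtain ⟨⟨hlam2ne, v₀, hv₀ne, hv₀S⟩, hlamlb⟩ := hlam
  obtain ⟨⟨hCL0, hCLb⟩, -⟩ := hCL
  -- N positive
  have hNpos : 0 < N := by
    rcases Nat.eq_zero_or_pos N with h | h
    · subst h
      exact absurd (funext fun i => i.elim0 : v₀ = 0) hv₀ne
    · exact h
  have hNR : (0:ℝ) < N := Nat.cast_pos.mpr hNpos
  have hsumsq_pos : 0 < ∑ i, v₀ i ^ 2 := by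
    rcases Function.ne_iff.mp hv₀ne with ⟨i, hi⟩
    apply Finset.sum_pos' (fun i _ => sq_nonneg _) ⟨i, Finset.mem_univ i, ?_⟩
    have : v₀ i ≠ 0 := hi
    positivity
  -- quadratic form facts
  have hdotL_nonneg : ∀ v : Fin N → ℝ, 0 ≤ ∑ i, v i * L.mulVec v i := by
    intro v
    rw [lap_quadform A L hL hbal v]
    have : (0:ℝ) ≤ ∑ i, ∑ j, A i j * (v i - v j) ^ 2 :=
      Finset.sum_nonneg fun i _ => Finset.sum_nonneg fun j _ =>
        mul_nonneg (hA i j) (sq_nonneg _)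
    linarith
  have hdotS_eq : ∀ v : Fin N → ℝ, ∑ i, v i * S.mulVec v i = ∑ i, v i * L.mulVec v i := by
    intro v
    have hLt : ∑ i, v i * Lᵀ.mulVec v i = ∑ i, v i * L.mulVec v i := by
      simp only [Matrix.mulVec, dotProduct, Matrix.transpose_apply, Finset.mul_sum]
      rw [Finset.sum_comm]
      exact Finset.sum_congr rfl fun i _ => Finset.sum_congr rfl fun j _ => by ring
    have h1 : ∀ i, S.mulVec v i = (1/2) * (L.mulVec v i + Lᵀ.mulVec v i) := by
      intro i
      rw [hS, Matrix.smul_mulVec, Matrix.add_mulVec]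
      simp
    calc ∑ i, v i * S.mulVec v i
        = ∑ i, ((1/2) * (v i * L.mulVec v i) + (1/2) * (v i * Lᵀ.mulVec v i)) := by
          exact Finset.sum_congr rfl fun i _ => by rw [h1 i]; ring
      _ = (1/2) * (∑ i, v i * L.mulVec v i) + (1/2) * (∑ i, v i * Lᵀ.mulVec v i) := by
          rw [Finset.sum_add_distrib, Finset.mul_sum, Finset.mul_sum]
      _ = ∑ i, v i * L.mulVec v i := by rw [hLt]; ring
  have hlam2pos : 0 < lam2 := by
    have hquad : ∑ i, v₀ i * S.mulVec v₀ i = lam2 * ∑ i, v₀ i ^ 2 := by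
      rw [Finset.mul_sum]
      apply Finset.sum_congr rfl
      intro i _
      rw [hv₀S]
      simp [Pi.smul_apply, smul_eq_mul]
      ring
    have h2 := hdotS_eq v₀
    have h3 := hdotL_nonneg v₀
    rcases lt_trichotomy lam2 0 with h | h | h
    · nlinarith
    · exact absurd h hlam2ne
    · exact h
  have hCLpos : 0 < CL := by
    rcases eq_or_lt_of_le hCL0 with h | h
    · exfalso
      have hLzero : ∀ u : Fin N → ℝ, L.mulVec u = 0 := by
        intro u
        have h1 := hCLb u
        rw [← h, zero_mul] at h1
        have h2 : en (L.mulVec u) = 0 := le_antisymm h1 (en_nonneg _)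
        have h3 : ∑ i, (L.mulVec u i) ^ 2 = 0 := by
          have := en_sq (L.mulVec u)
          rw [h2] at this
          simpa using this.symm
        funext i
        have := (Finset.sum_eq_zero_iff_of_nonneg (fun i _ => sq_nonneg _)).mp h3 i
          (Finset.mem_univ i)
        exact sq_eq_zero_iff.mp this
      have hL0 : L = 0 := by
        ext i k
        have := congrFun (hLzero (Pi.single k 1)) i
        simpa using this
      have hS0 : S = 0 := by rw [hS, hL0]; simp
      rw [hS0] at hv₀S
      have : lam2 • v₀ = 0 := by simpa using hv₀S.symm
      rcases smul_eq_zero.mp this with h' | h'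
      · exact hlam2ne h'
      · exact hv₀ne h'
    · exact h
  -- row and column sums of L vanish
  have hLrow : ∀ i, ∑ j, L i j = 0 := by
    intro i
    rw [hL]
    simp only [Matrix.sub_apply, Matrix.diagonal_apply, Finset.sum_sub_distrib]
    rw [Finset.sum_ite_eq Finset.univ i (fun _ => ∑ j, A i j)]
    simp
  have hLcol : ∀ j, ∑ i, L i j = 0 := by
    intro j
    rw [hL]
    simp only [Matrix.sub_apply, Matrix.diagonal_apply, Finset.sum_sub_distrib]
    have h1 : ∑ i, (if i = j then ∑ k, A i k else 0) = ∑ k, A j k := by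
      rw [Finset.sum_ite_eq' Finset.univ j (fun i => ∑ k, A i k)]
      simp
    rw [h1, hbal j]
    exact sub_self _
  have hcolmv : ∀ u : Fin N → ℝ, ∑ i, L.mulVec u i = 0 := by
    intro u
    simp only [Matrix.mulVec, dotProduct]
    rw [Finset.sum_comm]
    apply Finset.sum_eq_zero
    intro j _
    rw [← Finset.sum_mul, hLcol j, zero_mul]
  have hconstmv : ∀ k : ℝ, L.mulVec (fun _ => k) = 0 := by
    intro k
    funext i
    simp only [Matrix.mulVec, dotProduct]
    rw [← Finset.sum_mul, hLrow i, zero_mul]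
    rfl
  -- spectral gap
  have hsymS : Sᵀ = S := by
    rw [hS, Matrix.transpose_smul, Matrix.transpose_add, Matrix.transpose_transpose,
      add_comm]
  have hrowmvS : ∀ v : Fin N → ℝ, ∑ i, S.mulVec v i = 0 := by
    intro v
    have h1 : ∀ i, S.mulVec v i = (1/2) * (L.mulVec v i + Lᵀ.mulVec v i) := by
      intro i
      rw [hS, Matrix.smul_mulVec, Matrix.add_mulVec]
      simp
    have h2 : ∑ i, Lᵀ.mulVec v i = 0 := by
      simp only [Matrix.mulVec, dotProduct, Matrix.transpose_apply]
      rw [Finset.sum_comm]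
      apply Finset.sum_eq_zero
      intro j _
      rw [← Finset.sum_mul, hLrow j, zero_mul]
    calc ∑ i, S.mulVec v i = ∑ i, (1/2) * (L.mulVec v i + Lᵀ.mulVec v i) :=
          Finset.sum_congr rfl fun i _ => h1 i
      _ = (1/2) * ((∑ i, L.mulVec v i) + ∑ i, Lᵀ.mulVec v i) := by
          rw [mul_add, Finset.mul_sum, Finset.mul_sum, ← Finset.sum_add_distrib]
          exact Finset.sum_congr rfl fun i _ => by ring
      _ = 0 := by rw [hcolmv v, h2]; ring
  have hkerS : ∀ v : Fin N → ℝ, S.mulVec v = 0 → (∑ i, v i) = 0 → v = 0 := by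
    intro v hv0 hsum
    have h1 : ∑ i, v i * S.mulVec v i = 0 := by rw [hv0]; simp
    rw [hdotS_eq] at h1
    have hconst := lap_kernel A L hA hL hbal hconn v h1
    funext i
    have h2 : ∑ j, v j = (N : ℝ) * v i := by
      rw [Finset.sum_congr rfl (fun j _ => hconst j i)]
      rw [Finset.sum_const, Finset.card_univ, Fintype.card_fin, nsmul_eq_mul]
    rw [hsum] at h2
    have : v i = 0 := by
      replace h2 := mul_eq_zero.mp h2.symm
      rcases h2 with h | h
      · exact absurd (Nat.cast_eq_zero.mp h) (Nat.pos_iff_ne_zero.mp hNpos)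
      · exact h
    exact this
  have hgapS := spectral_gap S hsymS hkerS hrowmvS lam2
    (fun μ hμ hvex => hlamlb ⟨hμ, hvex⟩)
  have hgapL : ∀ v : Fin N → ℝ, (∑ i, v i) = 0 →
      lam2 * (∑ i, v i ^ 2) ≤ ∑ i, v i * L.mulVec v i := by
    intro v hv
    have := hgapS v hv
    rwa [hdotS_eq v] at this
  -- constants
  set Bc : ℝ := 1 / (1 - ε) * (CL / lam2) * (Δ / 2) * Real.sqrt N with hBdef
  set c : ℝ := 2 * ε * lam2 with hcdef
  set V₀ : ℝ := (1 / 2) * ∑ i, (y 0 0 i) ^ 2 with hV0def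
  have hsqrtN : 0 < Real.sqrt N := Real.sqrt_pos.mpr hNR
  have hBpos : 0 < Bc := by
    rw [hBdef]
    have h1 : 0 < 1 / (1 - ε) := by positivity
    have h2 : 0 < CL / lam2 := div_pos hCLpos hlam2pos
    have h3 : 0 < Δ / 2 := by linarith
    positivity
  have hcpos : 0 < c := by
    rw [hcdef]
    positivity
  have hBid : (1 - ε) * lam2 * Bc = CL * (Δ / 2) * Real.sqrt N := by
    rw [hBdef]
    field_simp
  -- mean of y is zero
  have hymean : ∀ j s, ∑ i, y j s i = 0 := by
    intro j s
    rw [hy]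
    rw [Finset.sum_sub_distrib, Finset.sum_const, Finset.card_univ, Fintype.card_fin,
      nsmul_eq_mul]
    field_simp
    ring
  -- y flows linearly
  have hyflow2 : ∀ j a s, a ∈ Set.Icc (τ j) (τ (j + 1)) → s ∈ Set.Icc (τ j) (τ (j + 1)) →
      ∀ i, y j s i = y j a i + (s - a) * (-(L.mulVec (q j))) i := by
    intro j a s ha hs i
    have hxs := hflow j s hs
    have hxa := hflow j a ha
    have hwsum : ∑ m, (-(L.mulVec (q j))) m = 0 := by
      have := hcolmv (q j)
      simp only [Pi.neg_apply]
      rw [Finset.sum_neg_distrib, this, neg_zero]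
    have hsum : ∑ m, x j s m = ∑ m, x j a m := by
      rw [hxs, hxa]
      simp only [Pi.add_apply, Pi.smul_apply, smul_eq_mul]
      rw [Finset.sum_add_distrib, Finset.sum_add_distrib, ← Finset.mul_sum, ← Finset.mul_sum,
        hwsum]
      ring
    simp only [hy]
    rw [hsum, hxs, hxa]
    simp only [Pi.add_apply, Pi.smul_apply, smul_eq_mul]
    ring
  -- derivative bound
  have hderiv_core : ∀ j s, s ∈ Set.Ico (τ j) (τ (j + 1)) →
      ∑ i, y j s i * (-(L.mulVec (q j))) i ≤
        -lam2 * (∑ i, (y j s i) ^ 2) + (CL * ((Δ / 2) * Real.sqrt N)) * en (y j s) := by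
    intro j s hs
    have hsIcc : s ∈ Set.Icc (τ j) (τ (j + 1)) := ⟨hs.1, hs.2.le⟩
    set e : Fin N → ℝ := fun i => q j i - x j s i with hedef
    have hdecomp : L.mulVec (q j) = L.mulVec (y j s) + L.mulVec e := by
      have hq : q j = (y j s + (fun _ => (∑ m, x j s m) / N)) + e := by
        funext i
        simp only [Pi.add_apply, hedef, hy]
        ring
      rw [hq, Matrix.mulVec_add, Matrix.mulVec_add, hconstmv]
      simp
    have hsplit : ∑ i, y j s i * (-(L.mulVec (q j))) i =
        -(∑ i, y j s i * L.mulVec (y j s) i) - ∑ i, y j s i * L.mulVec e i := by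
      rw [← Finset.sum_neg_distrib, ← Finset.sum_sub_distrib]
      apply Finset.sum_congr rfl
      intro i _
      rw [hdecomp]
      simp only [Pi.neg_apply, Pi.add_apply]
      ring
    have hbound1 : lam2 * (∑ i, (y j s i) ^ 2) ≤ ∑ i, y j s i * L.mulVec (y j s) i :=
      hgapL (y j s) (hymean j s)
    have he2 : ∑ i, e i ^ 2 ≤ (N : ℝ) * (Δ / 2) ^ 2 := by
      calc ∑ i, e i ^ 2 ≤ ∑ _i : Fin N, (Δ / 2) ^ 2 := by
            apply Finset.sum_le_sum
            intro i _
            have habs := abs_lt.mp (hC j s hs i)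
            simp only [hedef]
            nlinarith [habs.1, habs.2]
        _ = (N : ℝ) * (Δ / 2) ^ 2 := by
            rw [Finset.sum_const, Finset.card_univ, Fintype.card_fin, nsmul_eq_mul]
    have hene : en e ≤ Real.sqrt N * (Δ / 2) := by
      have h1 : en e ≤ Real.sqrt ((N : ℝ) * (Δ / 2) ^ 2) := Real.sqrt_le_sqrt he2
      rwa [Real.sqrt_mul (Nat.cast_nonneg N), Real.sqrt_sq (by linarith : (0:ℝ) ≤ Δ / 2)]
        at h1
    have hcs : |∑ i, y j s i * L.mulVec e i| ≤ en (y j s) * (CL * (Real.sqrt N * (Δ / 2))) := by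
      calc |∑ i, y j s i * L.mulVec e i| ≤ en (y j s) * en (L.mulVec e) := cs_sum _ _
        _ ≤ en (y j s) * (CL * en e) :=
            mul_le_mul_of_nonneg_left (hCLb e) (en_nonneg _)
        _ ≤ en (y j s) * (CL * (Real.sqrt N * (Δ / 2))) := by
            apply mul_le_mul_of_nonneg_left _ (en_nonneg _)
            exact mul_le_mul_of_nonneg_left hene hCL0
    rw [hsplit]
    nlinarith [hbound1, hcs, abs_le.mp hcs, neg_abs_le (∑ i, y j s i * L.mulVec e i)]
  -- per-point strict bound
  have hstep : ∀ j s, s ∈ Set.Ico (τ j) (τ (j + 1)) → Bc < en (y j s) →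
      ∑ i, y j s i * (-(L.mulVec (q j))) i ≤ -c * ((1 / 2) * ∑ i, (y j s i) ^ 2) := by
    intro j s hs hB
    have h1 := hderiv_core j s hs
    have h2 : (en (y j s)) ^ 2 = ∑ i, (y j s i) ^ 2 := en_sq _
    have h3 : 0 ≤ en (y j s) := en_nonneg _
    have hKid : CL * ((Δ / 2) * Real.sqrt N) = (1 - ε) * lam2 * Bc := by
      rw [hBid]; ring
    rw [hKid] at h1
    have hkey : 0 ≤ (1 - ε) * lam2 * ((en (y j s) - Bc) * en (y j s)) := by
      apply mul_nonneg (mul_nonneg h1ε.le hlam2pos.le)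
      apply mul_nonneg (by linarith) h3
    have hc2 : -c * ((1 / 2) * ∑ i, (y j s i) ^ 2) = -(ε * lam2) * ∑ i, (y j s i) ^ 2 := by
      rw [hcdef]; ring
    rw [hc2]
    nlinarith [h1, hkey, h2]
  -- Gronwall on one interval
  have hGron : ∀ j a' t, τ j ≤ a' → t ∈ Set.Icc a' (τ (j + 1)) →
      (∀ s, a' ≤ s → s ≤ t → Bc < en (y j s)) →
      (1 / 2) * ∑ i, (y j t i) ^ 2 ≤
        Real.exp (-(c * (t - a'))) * ((1 / 2) * ∑ i, (y j a' i) ^ 2) := by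
    intro j a' t ha' ht hB
    have hamem : a' ∈ Set.Icc (τ j) (τ (j + 1)) := ⟨ha', le_trans ht.1 ht.2⟩
    have htmem : t ∈ Set.Icc (τ j) (τ (j + 1)) := ⟨le_trans ha' ht.1, ht.2⟩
    set u : Fin N → ℝ := y j a' with hudef
    set w : Fin N → ℝ := -(L.mulVec (q j)) with hwdef
    have hyeq : ∀ s, s ∈ Set.Icc (τ j) (τ (j + 1)) → ∀ i, y j s i = u i + (s - a') * w i :=
      fun s hs i => hyflow2 j a' s hamem hs i
    have goal_eq : ∑ i, (y j t i) ^ 2 = ∑ i, (u i + (t - a') * w i) ^ 2 :=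
      Finset.sum_congr rfl fun i _ => by rw [hyeq t htmem i]
    rw [goal_eq]
    apply quad_gronwall u w a' t c ht.1
    intro s hsIoo
    have hsmem : s ∈ Set.Icc (τ j) (τ (j + 1)) := ⟨le_trans ha' hsIoo.1.le,
      le_trans hsIoo.2.le ht.2⟩
    have hsIco : s ∈ Set.Ico (τ j) (τ (j + 1)) := ⟨hsmem.1, lt_of_lt_of_le hsIoo.2 ht.2⟩
    have h1 := hstep j s hsIco (hB s hsIoo.1.le hsIoo.2.le)
    have e1 : ∑ i, (u i + (s - a') * w i) * w i = ∑ i, y j s i * w i :=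
      Finset.sum_congr rfl fun i _ => by rw [hyeq s hsmem i]
    have e2 : ∑ i, (u i + (s - a') * w i) ^ 2 = ∑ i, (y j s i) ^ 2 :=
      Finset.sum_congr rfl fun i _ => by rw [hyeq s hsmem i]
    rw [e1, e2]
    exact h1
  -- part 1: exponential decay while above threshold
  have part1 : ∀ j, ∀ t ∈ Set.Icc (τ j) (τ (j + 1)),
      (∀ j' s, s ∈ Set.Icc (τ j') (τ (j' + 1)) → s ≤ t → Bc < en (y j' s)) →
      (1 / 2) * ∑ i, (y j t i) ^ 2 ≤ Real.exp (-(c * t)) * V₀ := by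
    intro j
    induction j with
    | zero =>
      intro t ht hHyp
      have h1 := hGron 0 (τ 0) t le_rfl ⟨ht.1, ht.2⟩
        (fun s hs1 hs2 => hHyp 0 s ⟨hs1, le_trans hs2 ht.2⟩ hs2)
      rw [hτ0] at h1
      simpa [sub_zero, hV0def, hτ0] using h1
    | succ k ih =>
      intro t ht hHyp
      have hτle : τ k ≤ τ (k + 1) := hτ (Nat.le_succ k)
      have hjump_sum : ∑ i, (y (k + 1) (τ (k + 1)) i) ^ 2 =
          ∑ i, (y k (τ (k + 1)) i) ^ 2 := by
        apply Finset.sum_congr rfl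
        intro i _
        simp only [hy, hjumpx k]
      have hprev := ih (τ (k + 1)) ⟨hτle, le_rfl⟩
        (fun j' s hs hs2 => hHyp j' s hs (le_trans hs2 ht.1))
      have hg := hGron (k + 1) (τ (k + 1)) t le_rfl ht
        (fun s hs1 hs2 => hHyp (k + 1) s ⟨hs1, le_trans hs2 ht.2⟩ hs2)
      calc (1 / 2) * ∑ i, (y (k + 1) t i) ^ 2
          ≤ Real.exp (-(c * (t - τ (k + 1)))) * ((1 / 2) * ∑ i, (y (k + 1) (τ (k + 1)) i) ^ 2) :=
            hg
        _ = Real.exp (-(c * (t - τ (k + 1)))) * ((1 / 2) * ∑ i, (y k (τ (k + 1)) i) ^ 2) := by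
            rw [hjump_sum]
        _ ≤ Real.exp (-(c * (t - τ (k + 1)))) * (Real.exp (-(c * τ (k + 1))) * V₀) :=
            mul_le_mul_of_nonneg_left hprev (Real.exp_pos _).le
        _ = Real.exp (-(c * t)) * V₀ := by
            rw [← mul_assoc, ← Real.exp_add]
            congr 2
            ring
  -- ball invariance on one interval
  have hInv : ∀ j a', a' ∈ Set.Icc (τ j) (τ (j + 1)) → en (y j a') ≤ Bc →
      ∀ t ∈ Set.Icc a' (τ (j + 1)), en (y j t) ≤ Bc := by
    intro j a' ha' hena t ht
    have htmem : t ∈ Set.Icc (τ j) (τ (j + 1)) := ⟨le_trans ha'.1 ht.1, ht.2⟩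
    set u : Fin N → ℝ := y j a' with hudef
    set w : Fin N → ℝ := -(L.mulVec (q j)) with hwdef
    have hyeq : ∀ s, s ∈ Set.Icc (τ j) (τ (j + 1)) → ∀ i, y j s i = u i + (s - a') * w i :=
      fun s hs i => hyflow2 j a' s ha' hs i
    have hRa : ∑ i, u i ^ 2 ≤ Bc ^ 2 := by
      have h1 : (en u) ^ 2 ≤ Bc ^ 2 := pow_le_pow_left₀ (en_nonneg u) hena 2
      rwa [en_sq] at h1
    have hmain := quad_invariant u w a' (τ (j + 1)) (Bc ^ 2) ha'.2 hRa ?_ t ht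
    · have h2 : ∑ i, (y j t i) ^ 2 ≤ Bc ^ 2 := by
        rw [Finset.sum_congr rfl fun i _ => by rw [hyeq t htmem i]]
        exact hmain
      have h3 : en (y j t) ≤ Real.sqrt (Bc ^ 2) := Real.sqrt_le_sqrt h2
      rwa [Real.sqrt_sq hBpos.le] at h3
    · intro s hs hgt
      have hsmem : s ∈ Set.Icc (τ j) (τ (j + 1)) := ⟨le_trans ha'.1 hs.1, hs.2.le⟩
      have hsIco : s ∈ Set.Ico (τ j) (τ (j + 1)) := ⟨hsmem.1, hs.2⟩
      have hsum_eq : ∑ i, (u i + (s - a') * w i) ^ 2 = ∑ i, (y j s i) ^ 2 :=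
        Finset.sum_congr rfl fun i _ => by rw [hyeq s hsmem i]
      rw [hsum_eq] at hgt
      have hen_gt : Bc < en (y j s) := by
        have h4 : Real.sqrt (Bc ^ 2) < en (y j s) := by
          apply Real.sqrt_lt_sqrt (sq_nonneg _) hgt
        rwa [Real.sqrt_sq hBpos.le] at h4
      have h5 := hstep j s hsIco hen_gt
      have hsum_eq2 : ∑ i, (u i + (s - a') * w i) * w i = ∑ i, y j s i * w i :=
        Finset.sum_congr rfl fun i _ => by rw [hyeq s hsmem i]
      rw [hsum_eq2]
      calc ∑ i, y j s i * w i ≤ -c * ((1 / 2) * ∑ i, (y j s i) ^ 2) := h5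
        _ < 0 := by
          have h6 : 0 < ∑ i, (y j s i) ^ 2 := lt_trans (by positivity) hgt
          have : 0 < c * ((1 / 2) * ∑ i, (y j s i) ^ 2) := by positivity
          linarith
  -- conserved total sum
  have hsum_flow : ∀ j, ∀ t ∈ Set.Icc (τ j) (τ (j + 1)), ∑ m, x j t m = ∑ m, x j (τ j) m := by
    intro j t ht
    rw [hflow j t ht]
    simp only [Pi.add_apply, Pi.smul_apply, smul_eq_mul, Pi.neg_apply]
    rw [Finset.sum_add_distrib, ← Finset.mul_sum]
    have h1 : ∑ m, -(L.mulVec (q j) m) = 0 := by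
      rw [Finset.sum_neg_distrib, hcolmv (q j), neg_zero]
    rw [h1, mul_zero, add_zero]
  have hsum_base : ∀ j, ∑ m, x j (τ j) m = ∑ m, x 0 0 m := by
    intro j
    induction j with
    | zero => rw [hτ0]
    | succ k ih =>
      rw [hjumpx k]
      rw [hsum_flow k (τ (k + 1)) ⟨hτ (Nat.le_succ k), le_rfl⟩]
      exact ih
  have hCsum : ∀ j, ∀ t ∈ Set.Icc (τ j) (τ (j + 1)), ∑ m, x j t m = ∑ m, x 0 0 m :=
    fun j t ht => (hsum_flow j t ht).trans (hsum_base j)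
  have hyx : ∀ j, ∀ t ∈ Set.Icc (τ j) (τ (j + 1)),
      (fun i => x j t i - (∑ m, x 0 0 m) / N) = y j t := by
    intro j t ht
    rw [hy]
    funext i
    rw [hCsum j t ht]
  constructor
  · -- first conjunct
    exact part1
  · -- second conjunct
    by_cases hex : ∃ j0 s0, s0 ∈ Set.Icc (τ j0) (τ (j0 + 1)) ∧ en (y j0 s0) ≤ Bc
    · obtain ⟨j0, s0, hs0, hen0⟩ := hex
      have claim2 : ∀ k, j0 ≤ k → ∀ t ∈ Set.Icc (τ k) (τ (k + 1)), s0 ≤ t → en (y k t) ≤ Bc := by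
        intro k hk
        induction k, hk using Nat.le_induction with
        | base =>
          intro t ht hst
          exact hInv j0 s0 hs0 hen0 t ⟨hst, ht.2⟩
        | succ n hn ih =>
          intro t ht _
          have h2 : s0 ≤ τ (n + 1) := le_trans hs0.2 (hτ (by omega : j0 + 1 ≤ n + 1))
          have h3 := ih (τ (n + 1)) ⟨hτ (Nat.le_succ n), le_rfl⟩ h2
          have hje : en (y (n + 1) (τ (n + 1))) = en (y n (τ (n + 1))) := by
            rw [en, en]
            congr 1
            exact Finset.sum_congr rfl fun i _ => by simp only [hy, hjumpx n]
          have h1 : en (y (n + 1) (τ (n + 1))) ≤ Bc := by rw [hje]; exact h3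
          exact hInv (n + 1) (τ (n + 1)) ⟨le_rfl, hτ (Nat.le_succ (n + 1))⟩ h1 t ⟨ht.1, ht.2⟩
      refine ⟨max 0 (τ (j0 + 1)), le_max_left _ _, ?_⟩
      intro j t ht hTt
      have htj0 : τ (j0 + 1) ≤ t := le_trans (le_max_right _ _) hTt
      rw [hyx j t ht]
      rcases le_or_gt j0 j with hj | hj
      · exact claim2 j hj t ht (le_trans hs0.2 htj0)
      · -- j < j0 : time collapse
        have hcol : t ≤ τ j0 := le_trans ht.2 (hτ (by omega : j + 1 ≤ j0))
        have ht1 : τ j0 ≤ t := le_trans (hτ (Nat.le_succ j0)) htj0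
        have hteq : t = τ j0 := le_antisymm hcol ht1
        have hxcol : ∀ k j', j' ≤ k → τ k ≤ t → t ≤ τ (j' + 1) → x k t = x j' t := by
          intro k
          induction k with
          | zero =>
            intro j' hj' _ _
            rw [Nat.le_zero.mp hj']
          | succ n ihn =>
            intro j' hj' h1 h2
            rcases Nat.lt_or_ge j' (n + 1) with hlt | hge
            · have hj'n : j' ≤ n := by omega
              have hτn1 : τ (n + 1) = t :=
                le_antisymm h1 (le_trans h2 (hτ (by omega : j' + 1 ≤ n + 1)))
              have hstep1 : x (n + 1) t = x n t := by
                rw [← hτn1]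
                exact hjumpx n
              rw [hstep1]
              exact ihn j' hj'n (le_trans (hτ (Nat.le_succ n)) (le_of_eq hτn1)) h2
            · have : j' = n + 1 := by omega
              rw [this]
        have hxeq : x j0 t = x j t := hxcol j0 j hj.le (le_of_eq hteq.symm) ht.2
        have hyeqq : en (y j t) = en (y j0 t) := by
          rw [en, en]
          congr 1
          exact Finset.sum_congr rfl fun i _ => by simp only [hy, hxeq]
        rw [hyeqq]
        apply claim2 j0 le_rfl t ⟨ht1, le_trans hcol (hτ (Nat.le_succ j0))⟩
          (le_trans hs0.2 htj0)
    · -- never below threshold: contradiction for large t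
      push_neg at hex
      have hV0gt : Bc ^ 2 < ∑ i, (y 0 0 i) ^ 2 := by
        have h00 : (0:ℝ) ∈ Set.Icc (τ 0) (τ 1) := by
          constructor
          · rw [hτ0]
          · rw [← hτ0]; exact hτ (Nat.zero_le 1)
        have h1 := hex 0 0 h00
        nlinarith [en_sq (y 0 0), en_nonneg (y 0 0), hBpos]
      refine ⟨max 0 (Real.log (V₀ / (Bc ^ 2 / 2)) / c), le_max_left _ _, ?_⟩
      intro j t ht hTt
      exfalso
      have hdecay := part1 j t ht (fun j' s hs _ => hex j' s hs)
      have hVt : Bc ^ 2 / 2 < (1 / 2) * ∑ i, (y j t i) ^ 2 := by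
        have h1 := hex j t ht
        nlinarith [en_sq (y j t), en_nonneg (y j t), hBpos]
      have hx2 : Bc ^ 2 / 2 < Real.exp (-(c * t)) * V₀ := lt_of_lt_of_le hVt hdecay
      have hpos2 : 0 < Bc ^ 2 / 2 := by positivity
      have hE := Real.exp_pos (c * t)
      have hmul : Real.exp (-(c * t)) * Real.exp (c * t) = 1 := by
        rw [← Real.exp_add]; simp
      have h5 : Real.exp (c * t) < V₀ / (Bc ^ 2 / 2) := by
        rw [lt_div_iff₀ hpos2]
        nlinarith [hx2, hE, hmul]
      have h7 : 0 < V₀ / (Bc ^ 2 / 2) := lt_trans (Real.exp_pos _) h5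
      have h6 : c * t < Real.log (V₀ / (Bc ^ 2 / 2)) := (Real.lt_log_iff_exp_lt h7).mpr h5
      have h8 : Real.log (V₀ / (Bc ^ 2 / 2)) / c ≤ t := le_trans (le_max_right _ _) hTt
      have h9 : Real.log (V₀ / (Bc ^ 2 / 2)) ≤ c * t := by
        rw [div_le_iff₀ hcpos] at h8
        linarith [h8]
      linarith
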